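/- The function α ↦ ω_C(α,3) + α·log₂(8/7) is monotone nondecreasing on (0,∞), and there exists α_u with 10.12 < α_u < 10.13 such that ω_C(α_u,3) + α_u·log₂(8/7) = 2. (α_u is the threshold above which the average DPLL-UC search-tree size equals the average #DPLL-UC tree size to exponential order; the equation is ω_C(α,3) = 2 + α·log₂(1 − 2^{−3}).) -/

import Mathlib

/-- Ω(t,α,3) = t + α·log₂(1 − (3/8)t² + (1/4)t³) -/
noncomputable def Omega3 (t α : ℝ) : ℝ :=
  t + α * Real.logb 2 (1 - (3 / 8) * t ^ 2 + (1 / 4) * t ^ 3)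

/-- ω_C(α,3) = sup_{t∈[0,1]} Ω(t,α,3) -/
noncomputable def omegaC3 (α : ℝ) : ℝ :=
  sSup ((fun t => Omega3 t α) '' Set.Icc (0 : ℝ) 1)

namespace Omega3Aux

/-- bounds on the polynomial inside the log -/
lemma q_bounds {t : ℝ} (ht : t ∈ Set.Icc (0:ℝ) 1) :
    (7:ℝ)/8 ≤ 1 - (3 / 8) * t ^ 2 + (1 / 4) * t ^ 3 ∧
      1 - (3 / 8) * t ^ 2 + (1 / 4) * t ^ 3 ≤ 1 := by
  obtain ⟨h0, h1⟩ := ht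
  constructor
  · nlinarith [sq_nonneg (t - 1), sq_nonneg t]
  · nlinarith [sq_nonneg t]

lemma c_pos : 0 < Real.logb 2 (8/7) :=
  Real.logb_pos (by norm_num) (by norm_num)

/-- the key fact: log₂(q t) + log₂(8/7) ∈ [0, log₂(8/7)] for t ∈ [0,1] -/
lemma logq_bounds {t : ℝ} (ht : t ∈ Set.Icc (0:ℝ) 1) :
    0 ≤ Real.logb 2 (1 - (3 / 8) * t ^ 2 + (1 / 4) * t ^ 3) + Real.logb 2 (8/7) ∧
      Real.logb 2 (1 - (3 / 8) * t ^ 2 + (1 / 4) * t ^ 3) ≤ 0 := by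
  obtain ⟨hq1, hq2⟩ := q_bounds ht
  have hle0 : Real.logb 2 (1 - (3 / 8) * t ^ 2 + (1 / 4) * t ^ 3) ≤ 0 :=
    Real.logb_nonpos (by norm_num) (by linarith) hq2
  refine ⟨?_, hle0⟩
  have h78 : Real.logb 2 ((7:ℝ)/8) ≤ Real.logb 2 (1 - (3 / 8) * t ^ 2 + (1 / 4) * t ^ 3) :=
    Real.logb_le_logb_of_le (by norm_num) (by norm_num) hq1
  have : Real.logb 2 ((7:ℝ)/8) = - Real.logb 2 (8/7) := by
    rw [show (7:ℝ)/8 = ((8:ℝ)/7)⁻¹ by norm_num, Real.logb_inv]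
  linarith

lemma S_nonempty (α : ℝ) : ((fun t => Omega3 t α) '' Set.Icc (0:ℝ) 1).Nonempty :=
  ⟨Omega3 0 α, ⟨0, by constructor <;> norm_num⟩⟩

lemma S_bddAbove {α : ℝ} (hα : 0 ≤ α) :
    BddAbove ((fun t => Omega3 t α) '' Set.Icc (0:ℝ) 1) := by
  refine ⟨1, ?_⟩
  rintro y ⟨t, ht, rfl⟩
  have h := (logq_bounds ht).2
  have : α * Real.logb 2 (1 - (3 / 8) * t ^ 2 + (1 / 4) * t ^ 3) ≤ 0 :=
    mul_nonpos_of_nonneg_of_nonpos hα h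
  simp only [Omega3]
  have := ht.2
  linarith

/-- key comparison lemma -/
lemma key {β α : ℝ} (hβ : 0 < β) (hβα : β ≤ α) :
    omegaC3 β + β * Real.logb 2 (8/7) ≤ omegaC3 α + α * Real.logb 2 (8/7) ∧
    omegaC3 α + α * Real.logb 2 (8/7) ≤
      omegaC3 β + β * Real.logb 2 (8/7) + (α - β) * Real.logb 2 (8/7) := by
  have hα : (0:ℝ) ≤ α := le_trans hβ.le hβα
  set c := Real.logb 2 (8/7) with hc
  constructor
  · -- sSup Sβ + βc ≤ sSup Sα + αc
    have h : omegaC3 β ≤ omegaC3 α + α * c - β * c := by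
      apply csSup_le (S_nonempty β)
      rintro y ⟨t, ht, rfl⟩
      obtain ⟨hge, hle⟩ := logq_bounds ht
      have hmem : Omega3 t α ∈ ((fun t => Omega3 t α) '' Set.Icc (0:ℝ) 1) :=
        ⟨t, ht, rfl⟩
      have h2 : Omega3 t α ≤ omegaC3 α := le_csSup (S_bddAbove hα) hmem
      have h3 : Omega3 t β + β * c ≤ Omega3 t α + α * c := by
        simp only [Omega3]
        have := mul_le_mul_of_nonneg_right hβα hge
        ring_nf
        ring_nf at this
        nlinarith
      linarith
    linarith
  · -- sSup Sα ≤ sSup Sβ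
    have h : omegaC3 α ≤ omegaC3 β := by
      apply csSup_le (S_nonempty α)
      rintro y ⟨t, ht, rfl⟩
      obtain ⟨hge, hle⟩ := logq_bounds ht
      have hmem : Omega3 t β ∈ ((fun t => Omega3 t β) '' Set.Icc (0:ℝ) 1) :=
        ⟨t, ht, rfl⟩
      have h2 : Omega3 t β ≤ omegaC3 β := le_csSup (S_bddAbove hβ.le) hmem
      have h3 : Omega3 t α ≤ Omega3 t β := by
        simp only [Omega3]
        nlinarith
      linarith
    linarith

/-- log (57/50) < 19/145 -/
lemma log_5750 : Real.log ((57:ℝ)/50) < 19/145 := by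
  have hpow : ((57:ℝ)/50)^(145:ℕ) < (2.7182818283:ℝ)^(19:ℕ) := by
    rw [div_pow, div_lt_iff₀ (by positivity)]
    norm_num
  have he : (2.7182818283:ℝ)^(19:ℕ) < Real.exp 1 ^ (19:ℕ) := by
    apply pow_lt_pow_left₀ Real.exp_one_gt_d9 (by norm_num)
    norm_num
  have h2 : ((57:ℝ)/50)^(145:ℕ) < Real.exp 19 := by
    calc ((57:ℝ)/50)^(145:ℕ) < Real.exp 1 ^ (19:ℕ) := lt_trans hpow he
    _ = Real.exp 19 := by rw [Real.exp_one_pow]; norm_num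
  have h3 : Real.log (((57:ℝ)/50)^(145:ℕ)) < Real.log (Real.exp 19) :=
    Real.log_lt_log (by positivity) h2
  rw [Real.log_pow, Real.log_exp] at h3
  push_cast at h3
  linarith

/-- log₂(1993/1750) > 190/1013 -/
lemma logb_19931750 : (190:ℝ)/1013 < Real.logb 2 ((1993:ℝ)/1750) := by
  have hpow : (2:ℝ)^(190:ℕ) < ((1993:ℝ)/1750)^(1013:ℕ) := by
    rw [div_pow, lt_div_iff₀ (by positivity)]
    norm_num
    exact_mod_cast (show (1569275433846670190958947355801916604025588861116008628224:ℕ) * 1750 ^ 1013 < 1993 ^ 1013 by decide +kernel)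
  have h3 : Real.log ((2:ℝ)^(190:ℕ)) < Real.log (((1993:ℝ)/1750)^(1013:ℕ)) :=
    Real.log_lt_log (by positivity) hpow
  rw [Real.log_pow, Real.log_pow] at h3
  push_cast at h3
  rw [Real.logb, lt_div_iff₀ (Real.log_pos (by norm_num))]
  nlinarith [Real.log_pos (show (1:ℝ) < 2 by norm_num)]

/-- the pointwise bound at α = 10.12 -/
lemma pointwise_bound {t : ℝ} (ht : t ∈ Set.Icc (0:ℝ) 1) :
    Omega3 t (10.12) + (10.12) * Real.logb 2 (8/7) ≤ 2 - 1/2000 := by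
  obtain ⟨q, hqdef⟩ : ∃ q, 1 - (3 / 8) * t ^ 2 + (1 / 4) * t ^ 3 = q := ⟨_, rfl⟩
  obtain ⟨hq1, hq2⟩ := hqdef ▸ q_bounds ht
  have hqpos : 0 < q := by linarith
  obtain ⟨x, hxdef⟩ : ∃ x, x = (8:ℝ)/7 * q := ⟨_, rfl⟩
  have hx1 : (1:ℝ) ≤ x := by rw [hxdef]; nlinarith
  have hx2 : x ≤ (8:ℝ)/7 := by rw [hxdef]; nlinarith
  have hxpos : 0 < x := by linarith
  -- logb 2 q + logb 2 (8/7) = logb 2 x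
  have hsum : Real.logb 2 q + Real.logb 2 ((8:ℝ)/7) = Real.logb 2 x := by
    rw [hxdef, Real.logb_mul (by norm_num) (ne_of_gt hqpos)]
    ring
  -- tangent bound on log x
  have htan : Real.log x ≤ 19/145 + (50/57) * x - 1 := by
    have h1 : Real.log (x * (50/57)) ≤ x * (50/57) - 1 :=
      Real.log_le_sub_one_of_pos (by positivity)
    have h2 : Real.log x = Real.log ((57:ℝ)/50) + Real.log (x * (50/57)) := by
      rw [← Real.log_mul (by norm_num) (by positivity)]
      congr 1
      field_simp
    have := log_5750
    linarith
  have hR0 : (0:ℝ) ≤ 19/145 + (50/57) * x - 1 := by nlinarith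
  have hlog2 : (0.6931471803:ℝ) < Real.log 2 := Real.log_two_gt_d9
  have hlogx0 : 0 ≤ Real.log x := Real.log_nonneg hx1
  have hb : Real.logb 2 x ≤ (19/145 + (50/57) * x - 1) / (0.6931471803:ℝ) := by
    rw [Real.logb]
    exact div_le_div₀ hR0 htan (by norm_num) hlog2.le
  have hkey : (10.12:ℝ) * ((19/145 + (50/57) * x - 1) / (0.6931471803:ℝ)) ≤
      2 - 1/2000 - t := by
    rw [mul_div_assoc', div_le_iff₀ (by norm_num : (0:ℝ) < 0.6931471803)]
    rw [hxdef, ← hqdef]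
    obtain ⟨ht0, ht1⟩ := ht
    nlinarith [mul_nonneg ht0 (sq_nonneg (t - 101/1000)),
      mul_nonneg (sub_nonneg.2 ht1) (sq_nonneg (t - 101/1000))]
  have hmul : (10.12:ℝ) * Real.logb 2 x ≤
      (10.12:ℝ) * ((19/145 + (50/57) * x - 1) / (0.6931471803:ℝ)) :=
    mul_le_mul_of_nonneg_left hb (by norm_num)
  simp only [Omega3, hqdef]
  have : (10.12:ℝ) * Real.logb 2 q + (10.12:ℝ) * Real.logb 2 ((8:ℝ)/7)
      = (10.12:ℝ) * Real.logb 2 x := by rw [← hsum]; ring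
  have ht1 := ht.2
  linarith [this ▸ (le_trans hmul hkey)]

lemma F1012_lt : omegaC3 (10.12) + (10.12) * Real.logb 2 (8/7) < 2 := by
  have h : omegaC3 (10.12) ≤ 2 - 1/2000 - (10.12) * Real.logb 2 (8/7) := by
    apply csSup_le (S_nonempty _)
    rintro y ⟨t, ht, rfl⟩
    have := pointwise_bound ht
    linarith
  linarith

lemma F1013_gt : 2 < omegaC3 (10.13) + (10.13) * Real.logb 2 (8/7) := by
  have hmem : Omega3 (1/10) (10.13) ∈
      ((fun t => Omega3 t (10.13)) '' Set.Icc (0:ℝ) 1) :=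
    ⟨1/10, ⟨by norm_num, by norm_num⟩, rfl⟩
  have h1 : Omega3 (1/10) (10.13) ≤ omegaC3 (10.13) :=
    le_csSup (S_bddAbove (by norm_num)) hmem
  have hq : (1:ℝ) - (3 / 8) * (1/10) ^ 2 + (1 / 4) * (1/10) ^ 3 = 1993/2000 := by
    norm_num
  have hsum : Real.logb 2 ((1993:ℝ)/2000) + Real.logb 2 ((8:ℝ)/7)
      = Real.logb 2 ((1993:ℝ)/1750) := by
    rw [← Real.logb_mul (by norm_num) (by norm_num)]
    norm_num
  have hlb := logb_19931750
  have h2 : Omega3 (1/10) (10.13) + (10.13) * Real.logb 2 (8/7) =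
      1/10 + (10.13) * Real.logb 2 ((1993:ℝ)/1750) := by
    simp only [Omega3, hq]
    rw [← hsum]
    ring
  have h3 : (2:ℝ) < 1/10 + (10.13) * Real.logb 2 ((1993:ℝ)/1750) := by
    nlinarith
  linarith

end Omega3Aux

theorem omegaC3_threshold :
    MonotoneOn (fun α : ℝ => omegaC3 α + α * Real.logb 2 (8 / 7)) (Set.Ioi (0 : ℝ)) ∧
    ∃ αu : ℝ, 10.12 < αu ∧ αu < 10.13 ∧
      omegaC3 αu + αu * Real.logb 2 (8 / 7) = 2 := by
  open Omega3Aux in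
  constructor
  · intro a ha b hb hab
    exact (key ha hab).1
  · set F := fun α : ℝ => omegaC3 α + α * Real.logb 2 (8 / 7) with hF
    have hc := Omega3Aux.c_pos
    -- Lipschitz on the interval [10.12, 10.13]
    have hlip : ∀ a ∈ Set.Icc (10.12:ℝ) 10.13, ∀ b ∈ Set.Icc (10.12:ℝ) 10.13,
        dist (F a) (F b) ≤ (Real.logb 2 (8/7)) * dist a b := by
      intro a ha b hb
      rcases le_total a b with h | h
      · have hkey := Omega3Aux.key (by linarith [ha.1] : (0:ℝ) < a) h
        rw [Real.dist_eq, Real.dist_eq, abs_of_nonpos (by dsimp [F]; linarith [hkey.1]),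
          abs_of_nonpos (by linarith)]
        dsimp [F]
        nlinarith [hkey.2]
      · have hkey := Omega3Aux.key (by linarith [hb.1] : (0:ℝ) < b) h
        rw [Real.dist_eq, Real.dist_eq, abs_of_nonneg (by dsimp [F]; linarith [hkey.1]),
          abs_of_nonneg (by linarith)]
        dsimp [F]
        nlinarith [hkey.2]
    have hcont : ContinuousOn F (Set.Icc (10.12:ℝ) 10.13) := by
      apply LipschitzOnWith.continuousOn (K := (Real.logb 2 (8/7)).toNNReal)
      rw [lipschitzOnWith_iff_dist_le_mul]
      intro a ha b hb
      rw [Real.coe_toNNReal _ hc.le]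
      exact hlip a ha b hb
    have h1 : F 10.12 < 2 := Omega3Aux.F1012_lt
    have h2 : (2:ℝ) < F 10.13 := Omega3Aux.F1013_gt
    have hsub := intermediate_value_Icc (by norm_num : (10.12:ℝ) ≤ 10.13) hcont
    have h2mem : (2:ℝ) ∈ Set.Icc (F 10.12) (F 10.13) := ⟨h1.le, h2.le⟩
    obtain ⟨αu, hαu, hFαu⟩ := hsub h2mem
    refine ⟨αu, ?_, ?_, hFαu⟩
    · rcases eq_or_lt_of_le hαu.1 with h | h
      · exfalso; rw [← h] at hFαu; rw [hFαu] at h1; exact lt_irrefl _ h1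
      · exact h
    · rcases eq_or_lt_of_le hαu.2 with h | h
      · exfalso; rw [h] at hFαu; rw [hFαu] at h2; exact lt_irrefl _ h2
      · exact h
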